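/- (Lattice core of the classification of complex rigid generalized K3 surfaces.) Let σ ∈ Λ_ℂ with Re σ and Im σ ℝ-linearly independent in Λ_ℝ, and let β ∈ ℂ. Set Re φ = (0, Re σ, Re β) and Im φ = (0, Im σ, Im β) in M_ℝ. Then the following are equivalent: (a) there exists a ℤ-submodule L ⊆ M of rank 2 whose ℝ-span contains both Re φ and Im φ; (b) there exists a ℤ-submodule T ⊆ Λ of rank 2 whose ℝ-span contains both Re σ and Im σ, and there exists a ℚ-linear map f : Λ_ℚ → ℚ whose ℂ-linear extension to Λ_ℂ satisfies f(σ) = β. (Condition (b) is the Mukai-lattice translation of: the transcendental lattice of M_σ has rank 2 and the B-field B' with β = ∫ B' ∧ σ is rational.) -/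

import Mathlib

noncomputable section

/-- The canonical map `Λ = ℤᵐ → Λ_ℝ = ℝᵐ`. -/
def intCast {m : ℕ} (v : Fin m → ℤ) : Fin m → ℝ := fun i => (v i : ℝ)

/-- The Mukai lattice `M = ℤ × Λ × ℤ` viewed inside `M_ℝ = ℝ × Λ_ℝ × ℝ`. -/
def Mset (m : ℕ) : Set (ℝ × (Fin m → ℝ) × ℝ) :=
  {w | ∃ (a c : ℤ) (x : Fin m → ℤ), w = ((a : ℝ), intCast x, (c : ℝ))}

/-!
Lattice core of the classification of complex rigid generalized K3 surfaces.
Let `σ = s₁ + i·s₂ ∈ Λ_ℂ` with `s₁, s₂` ℝ-linearly independent and `β ∈ ℂ`.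
Set `Re φ = (0, s₁, Re β)` and `Im φ = (0, s₂, Im β)` in `M_ℝ`.  Then there is a
rank-2 ℤ-submodule `L ⊆ M` whose ℝ-span contains `Re φ` and `Im φ` iff:
there is a rank-2 ℤ-submodule `T ⊆ Λ` whose ℝ-span contains `s₁` and `s₂`, and a
ℚ-linear map `f : Λ_ℚ → ℚ` whose ℂ-linear extension satisfies `f(σ) = β`.
-/


/-- `intCast` as a ℤ-linear map. -/
def intCastL (m : ℕ) : (Fin m → ℤ) →ₗ[ℤ] (Fin m → ℝ) where
  toFun := intCast
  map_add' x y := by funext i; simp [intCast]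
  map_smul' c x := by funext i; simp [intCast]

/-- The lattice inclusion `ℤ × ℤᵐ × ℤ → ℝ × ℝᵐ × ℝ` as a ℤ-linear map. -/
def jL (m : ℕ) : (ℤ × (Fin m → ℤ) × ℤ) →ₗ[ℤ] (ℝ × (Fin m → ℝ) × ℝ) where
  toFun p := ((p.1 : ℝ), intCast p.2.1, (p.2.2 : ℝ))
  map_add' x y := by ext <;> simp [intCast]
  map_smul' c x := by ext <;> simp [intCast]

lemma Mset_eq (m : ℕ) : Mset m = ↑(LinearMap.range (jL m)) := by
  ext w
  constructor
  · rintro ⟨a, c, x, rfl⟩; exact ⟨(a, x, c), rfl⟩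
  · rintro ⟨⟨a, x, c⟩, rfl⟩; exact ⟨a, c, x, rfl⟩

lemma jL_injective (m : ℕ) : Function.Injective (jL m) := by
  rintro ⟨a, x, c⟩ ⟨a', x', c'⟩ h
  simp only [jL, LinearMap.coe_mk, AddHom.coe_mk, Prod.mk.injEq, intCast] at h
  obtain ⟨h1, h2, h3⟩ := h
  refine Prod.ext ?_ (Prod.ext ?_ ?_)
  · exact_mod_cast h1
  · funext i
    have := congrFun h2 i
    simpa [intCast] using this
  · exact_mod_cast h3

lemma range_fin2 {M : Type*} (v : Fin 2 → M) : Set.range v = {v 0, v 1} := by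
  ext x
  constructor
  · rintro ⟨i, rfl⟩; fin_cases i <;> simp
  · rintro (rfl | rfl) <;> [exact ⟨0, rfl⟩; exact ⟨1, rfl⟩]

/-- A submodule with a basis indexed by `Fin 2` is the span of the two basis vectors. -/
lemma span_eq_of_basis2 {R M : Type*} [CommRing R] [AddCommGroup M] [Module R M]
    (N : Submodule R M) (b : Module.Basis (Fin 2) R N) :
    N = Submodule.span R {(↑(b 0) : M), ↑(b 1)} := by
  have h := b.span_eq
  have h2 : Submodule.map N.subtype (Submodule.span R (Set.range ⇑b)) = Submodule.map N.subtype ⊤ := by rw [h]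
  rw [Submodule.map_subtype_top, Submodule.map_span] at h2
  have h3 : (⇑N.subtype '' Set.range ⇑b) = {(↑(b 0) : M), ↑(b 1)} := by
    rw [← Set.range_comp]
    exact range_fin2 _
  rw [h3] at h2
  exact h2.symm

/-- If two independent vectors lie in the span of a pair, that pair is independent. -/
lemma indep_of_spanning {V : Type*} [AddCommGroup V] [Module ℝ V] {s1 s2 u1 u2 : V}
    (hind : LinearIndependent ℝ ![s1, s2])
    (h1 : s1 ∈ Submodule.span ℝ ({u1, u2} : Set V))
    (h2 : s2 ∈ Submodule.span ℝ ({u1, u2} : Set V)) :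
    LinearIndependent ℝ ![u1, u2] := by
  have hle : Submodule.span ℝ ({s1, s2} : Set V) ≤ Submodule.span ℝ ({u1, u2} : Set V) := by
    rw [Submodule.span_le]
    rintro x (rfl | rfl) <;> assumption
  haveI : FiniteDimensional ℝ (Submodule.span ℝ ({u1, u2} : Set V)) := by
    exact FiniteDimensional.span_of_finite _ (Set.toFinite _)
  have hfr1 : Module.finrank ℝ (Submodule.span ℝ ({s1, s2} : Set V)) = 2 := by
    have := finrank_span_eq_card hind
    rw [range_fin2] at this
    simp at this
    exact this
  have hle2 : (2 : ℕ) ≤ Module.finrank ℝ (Submodule.span ℝ ({u1, u2} : Set V)) := by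
    rw [← hfr1]
    exact Submodule.finrank_mono hle
  have hge : Module.finrank ℝ (Submodule.span ℝ ({u1, u2} : Set V)) ≤ 2 := by
    have := finrank_range_le_card (R := ℝ) ![u1, u2]
    rwa [Set.finrank, range_fin2] at this
  rw [linearIndependent_iff_card_eq_finrank_span, Set.finrank, range_fin2]
  simp only [Matrix.cons_val_zero, Matrix.cons_val_one, Matrix.head_cons, Fintype.card_fin]
  exact le_antisymm hle2 hge

lemma span_span_pair {V : Type*} [AddCommGroup V] [Module ℝ V] (u1 u2 : V) :
    Submodule.span ℝ ((Submodule.span ℤ ({u1, u2} : Set V) : Submodule ℤ V) : Set V)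
      = Submodule.span ℝ ({u1, u2} : Set V) :=
  Submodule.span_span_of_tower ℤ ℝ ({u1, u2} : Set V)

lemma sum_split {m : ℕ} (a s1 s2 : Fin m → ℝ) (β : ℂ) :
    (∑ i, ((a i : ℂ) * ((s1 i : ℂ) + (s2 i : ℂ) * Complex.I)) = β) ↔
      ((∑ i, a i * s1 i) = β.re ∧ (∑ i, a i * s2 i) = β.im) := by
  rw [Complex.ext_iff, Complex.re_sum, Complex.im_sum]
  simp [Complex.ext_iff]

lemma sum_cast {m : ℕ} (f : (Fin m → ℚ) →ₗ[ℚ] ℚ) (x : Fin m → ℤ) :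
    ∑ i, (f (Pi.single i 1) : ℝ) * (x i : ℝ) = ((f (fun i => (x i : ℚ)) : ℚ) : ℝ) := by
  set e : Fin m → (Fin m → ℚ) := fun i => Pi.single i 1 with he
  have h1 : (fun i => (x i : ℚ)) = ∑ i, (x i : ℚ) • e i := by
    funext j
    simp [he, Finset.sum_apply, Pi.single_apply]
  have h2 : (f (fun i => (x i : ℚ)) : ℚ) = ∑ i, (x i : ℚ) * f (Pi.single i 1) := by
    rw [h1, map_sum]
    simp [smul_eq_mul, he]
  rw [h2]
  push_cast
  exact Finset.sum_congr rfl fun i _ => by ring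

lemma sum_comb {m : ℕ} (a u v : Fin m → ℝ) (p q : ℝ) :
    ∑ i, a i * (p * u i + q * v i)
      = p * ∑ i, a i * u i + q * ∑ i, a i * v i := by
  rw [Finset.mul_sum, Finset.mul_sum, ← Finset.sum_add_distrib]
  exact Finset.sum_congr rfl fun i _ => by ring

lemma exists_pair_span {P V : Type*} [AddCommGroup P] [AddCommGroup V]
    [Module.Free ℤ P] [Module.Finite ℤ P]
    (g : P →ₗ[ℤ] V) (hg : Function.Injective g) (L : Submodule ℤ V)
    (hle : L ≤ LinearMap.range g) (hrk : Module.finrank ℤ L = 2) :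
    ∃ p1 p2 : P, L = Submodule.span ℤ {g p1, g p2} := by
  classical
  set L' := L.comap g with hL'
  have hmap : Submodule.map g L' = L := by
    rw [hL', Submodule.map_comap_eq, inf_eq_right.2 hle]
  obtain ⟨n, b⟩ := Submodule.basisOfPid (Module.Free.chooseBasis ℤ P) L'
  have h2 := (Submodule.equivMapOfInjective g hg L').finrank_eq
  rw [hmap] at h2
  have hn : n = 2 := by
    have h1 := Module.finrank_eq_card_basis b
    simp only [Fintype.card_fin] at h1
    omega
  subst hn
  have hspan := span_eq_of_basis2 L' b
  refine ⟨↑(b 0), ↑(b 1), ?_⟩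
  rw [← hmap]
  conv_lhs => rw [hspan]
  rw [Submodule.map_span, Set.image_pair]

lemma indep_int {m : ℕ} {x1 x2 : Fin m → ℤ}
    (h : LinearIndependent ℝ ![intCast x1, intCast x2]) :
    LinearIndependent ℤ ![intCast x1, intCast x2] := by
  rw [LinearIndependent.pair_iff] at h ⊢
  intro a b hab
  have h2 := h (a : ℝ) (b : ℝ) (by
    rw [Int.cast_smul_eq_zsmul, Int.cast_smul_eq_zsmul]; exact hab)
  exact ⟨by exact_mod_cast h2.1, by exact_mod_cast h2.2⟩

lemma indep_rat {m : ℕ} {x1 x2 : Fin m → ℤ}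
    (h : LinearIndependent ℝ ![intCast x1, intCast x2]) :
    LinearIndependent ℚ ![(fun i => (x1 i : ℚ)), (fun i => (x2 i : ℚ))] := by
  rw [LinearIndependent.pair_iff] at h ⊢
  intro a b hab
  have h2 := h (a : ℝ) (b : ℝ) (by
    funext i
    have := congrFun hab i
    simp only [Pi.add_apply, Pi.smul_apply, smul_eq_mul, Pi.zero_apply] at this ⊢
    have : ((a * x1 i + b * x2 i : ℚ) : ℝ) = 0 := by rw [this]; norm_num
    push_cast at this
    simpa [intCast] using this)
  exact ⟨by exact_mod_cast h2.1, by exact_mod_cast h2.2⟩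

lemma exists_funct {m : ℕ} {x1 x2 : Fin m → ℤ}
    (h : LinearIndependent ℝ ![intCast x1, intCast x2]) (c1 c2 : ℚ) :
    ∃ f : (Fin m → ℚ) →ₗ[ℚ] ℚ,
      f (fun i => (x1 i : ℚ)) = c1 ∧ f (fun i => (x2 i : ℚ)) = c2 := by
  have hli := indep_rat h
  set v : Fin 2 → (Fin m → ℚ) := ![(fun i => (x1 i : ℚ)), (fun i => (x2 i : ℚ))] with hv
  let b : Module.Basis (Fin 2) ℚ (Submodule.span ℚ (Set.range v)) := Module.Basis.span hli
  let g0 : (Submodule.span ℚ (Set.range v)) →ₗ[ℚ] ℚ := b.constr ℚ ![c1, c2]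
  obtain ⟨f, hf⟩ := LinearMap.exists_extend g0
  refine ⟨f, ?_, ?_⟩
  · have hm : v 0 ∈ Submodule.span ℚ (Set.range v) :=
      Submodule.subset_span (Set.mem_range_self 0)
    have : f (v 0) = g0 ⟨v 0, hm⟩ := by
      rw [← hf]; rfl
    rw [show (fun i => (x1 i : ℚ)) = v 0 by simp [hv], this]
    have hb : (⟨v 0, hm⟩ : Submodule.span ℚ (Set.range v)) = b 0 := by
      apply Subtype.ext
      rw [Module.Basis.span_apply]
    rw [hb]
    simp [g0, Module.Basis.constr_basis]
  · have hm : v 1 ∈ Submodule.span ℚ (Set.range v) :=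
      Submodule.subset_span (Set.mem_range_self 1)
    have : f (v 1) = g0 ⟨v 1, hm⟩ := by
      rw [← hf]; rfl
    rw [show (fun i => (x2 i : ℚ)) = v 1 by simp [hv], this]
    have hb : (⟨v 1, hm⟩ : Submodule.span ℚ (Set.range v)) = b 1 := by
      apply Subtype.ext
      rw [Module.Basis.span_apply]
    rw [hb]
    simp [g0, Module.Basis.constr_basis]

lemma intCastL_injective (m : ℕ) : Function.Injective (intCastL m) := by
  intro x y h
  funext i
  have := congrFun h i
  simpa [intCastL, intCast] using this

lemma intCast_zsmul {m : ℕ} (N : ℤ) (y : Fin m → ℤ) :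
    intCast (N • y) = (N : ℝ) • intCast y := by
  funext i
  simp only [intCast, Pi.smul_apply, smul_eq_mul]
  push_cast
  ring

theorem complex_rigid_lattice_classification
    {m : ℕ} (s1 s2 : Fin m → ℝ) (hind : LinearIndependent ℝ ![s1, s2]) (β : ℂ) :
    (∃ L : Submodule ℤ (ℝ × (Fin m → ℝ) × ℝ),
        (L : Set (ℝ × (Fin m → ℝ) × ℝ)) ⊆ Mset m ∧
        Module.finrank ℤ L = 2 ∧
        ((0 : ℝ), s1, β.re) ∈ Submodule.span ℝ (L : Set (ℝ × (Fin m → ℝ) × ℝ)) ∧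
        ((0 : ℝ), s2, β.im) ∈ Submodule.span ℝ (L : Set (ℝ × (Fin m → ℝ) × ℝ))) ↔
    ((∃ T : Submodule ℤ (Fin m → ℝ),
        (T : Set (Fin m → ℝ)) ⊆ Set.range (intCast (m := m)) ∧
        Module.finrank ℤ T = 2 ∧
        s1 ∈ Submodule.span ℝ (T : Set (Fin m → ℝ)) ∧
        s2 ∈ Submodule.span ℝ (T : Set (Fin m → ℝ))) ∧
      (∃ f : (Fin m → ℚ) →ₗ[ℚ] ℚ,
        (∑ i, (f (Pi.single i 1) : ℂ) * ((s1 i : ℂ) + (s2 i : ℂ) * Complex.I)) = β)) := by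
  constructor
  · rintro ⟨L, hsub, hrk, hφ1, hφ2⟩
    have hle : L ≤ LinearMap.range (jL m) := by
      intro x hx
      have := hsub hx
      rwa [Mset_eq] at this
    obtain ⟨⟨a1, x1, c1⟩, ⟨a2, x2, c2⟩, hL⟩ :=
      exists_pair_span (jL m) (jL_injective m) L hle hrk
    set v : ℝ × (Fin m → ℝ) × ℝ := ((a1 : ℝ), intCast x1, (c1 : ℝ)) with hv
    set w : ℝ × (Fin m → ℝ) × ℝ := ((a2 : ℝ), intCast x2, (c2 : ℝ)) with hw
    have hjv : jL m (a1, x1, c1) = v := rfl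
    have hjw : jL m (a2, x2, c2) = w := rfl
    rw [hjv, hjw] at hL
    have hspanL : Submodule.span ℝ (L : Set (ℝ × (Fin m → ℝ) × ℝ))
        = Submodule.span ℝ {v, w} := by
      rw [hL]; exact span_span_pair v w
    rw [hspanL] at hφ1 hφ2
    -- φ1 = p1 • v + q1 • w etc.
    obtain ⟨p1, q1, hpq1⟩ := Submodule.mem_span_pair.1 hφ1
    obtain ⟨p2, q2, hpq2⟩ := Submodule.mem_span_pair.1 hφ2
    have hs1 : p1 • intCast x1 + q1 • intCast x2 = s1 := by
      have := congrArg (fun z => z.2.1) hpq1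
      simpa using this
    have hs2 : p2 • intCast x1 + q2 • intCast x2 = s2 := by
      have := congrArg (fun z => z.2.1) hpq2
      simpa using this
    have hc1 : p1 * (c1 : ℝ) + q1 * (c2 : ℝ) = β.re := by
      have := congrArg (fun z => z.2.2) hpq1
      simpa using this
    have hc2 : p2 * (c1 : ℝ) + q2 * (c2 : ℝ) = β.im := by
      have := congrArg (fun z => z.2.2) hpq2
      simpa using this
    have hmem1 : s1 ∈ Submodule.span ℝ ({intCast x1, intCast x2} : Set (Fin m → ℝ)) :=
      Submodule.mem_span_pair.2 ⟨p1, q1, hs1⟩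
    have hmem2 : s2 ∈ Submodule.span ℝ ({intCast x1, intCast x2} : Set (Fin m → ℝ)) :=
      Submodule.mem_span_pair.2 ⟨p2, q2, hs2⟩
    have hindu : LinearIndependent ℝ ![intCast x1, intCast x2] :=
      indep_of_spanning hind hmem1 hmem2
    constructor
    · refine ⟨Submodule.span ℤ {intCast x1, intCast x2}, ?_, ?_, ?_, ?_⟩
      · intro x hx
        have hT' : Submodule.span ℤ {intCast x1, intCast x2} ≤ LinearMap.range (intCastL m) := by
          rw [Submodule.span_le]
          rintro y (rfl | rfl)
          · exact ⟨x1, rfl⟩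
          · exact ⟨x2, rfl⟩
        obtain ⟨y, hy⟩ := hT' hx
        exact ⟨y, hy⟩
      · have h := finrank_span_eq_card (indep_int hindu)
        rw [range_fin2] at h
        simp at h
        exact h
      · rw [span_span_pair]; exact hmem1
      · rw [span_span_pair]; exact hmem2
    · obtain ⟨f, hfx1, hfx2⟩ := exists_funct hindu (c1 : ℚ) (c2 : ℚ)
      refine ⟨f, ?_⟩
      have key : ∀ i, (f (Pi.single i 1) : ℂ)
          = (((f (Pi.single i 1) : ℝ) : ℝ) : ℂ) := by intro i; norm_cast
      rw [show (∑ i, (f (Pi.single i 1) : ℂ) * ((s1 i : ℂ) + (s2 i : ℂ) * Complex.I))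
          = ∑ i, (((f (Pi.single i 1) : ℝ)) : ℂ) * ((s1 i : ℂ) + (s2 i : ℂ) * Complex.I) from
        Finset.sum_congr rfl fun i _ => by rw [key i]]
      rw [sum_split]
      constructor
      · have : ∀ i, s1 i = p1 * (x1 i : ℝ) + q1 * (x2 i : ℝ) := by
          intro i
          have := congrFun hs1 i
          simpa [intCast] using this.symm
        calc ∑ i, (f (Pi.single i 1) : ℝ) * s1 i
            = ∑ i, (f (Pi.single i 1) : ℝ) * (p1 * (x1 i : ℝ) + q1 * (x2 i : ℝ)) :=
              Finset.sum_congr rfl fun i _ => by rw [this i]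
          _ = p1 * ∑ i, (f (Pi.single i 1) : ℝ) * (x1 i : ℝ)
              + q1 * ∑ i, (f (Pi.single i 1) : ℝ) * (x2 i : ℝ) := sum_comb _ _ _ _ _
          _ = p1 * (c1 : ℝ) + q1 * (c2 : ℝ) := by
              rw [sum_cast, sum_cast, hfx1, hfx2]; push_cast; ring
          _ = β.re := hc1
      · have : ∀ i, s2 i = p2 * (x1 i : ℝ) + q2 * (x2 i : ℝ) := by
          intro i
          have := congrFun hs2 i
          simpa [intCast] using this.symm
        calc ∑ i, (f (Pi.single i 1) : ℝ) * s2 i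
            = ∑ i, (f (Pi.single i 1) : ℝ) * (p2 * (x1 i : ℝ) + q2 * (x2 i : ℝ)) :=
              Finset.sum_congr rfl fun i _ => by rw [this i]
          _ = p2 * ∑ i, (f (Pi.single i 1) : ℝ) * (x1 i : ℝ)
              + q2 * ∑ i, (f (Pi.single i 1) : ℝ) * (x2 i : ℝ) := sum_comb _ _ _ _ _
          _ = p2 * (c1 : ℝ) + q2 * (c2 : ℝ) := by
              rw [sum_cast, sum_cast, hfx1, hfx2]; push_cast; ring
          _ = β.im := hc2
  · rintro ⟨⟨T, hTsub, hTrk, hs1T, hs2T⟩, f, hf⟩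
    have hle : T ≤ LinearMap.range (intCastL m) := by
      intro x hx
      obtain ⟨y, hy⟩ := hTsub hx
      exact ⟨y, hy⟩
    obtain ⟨y1, y2, hT⟩ := exists_pair_span (intCastL m) (intCastL_injective m) T hle hTrk
    set u1 : Fin m → ℝ := intCast y1 with hu1
    set u2 : Fin m → ℝ := intCast y2 with hu2
    have hj1 : intCastL m y1 = u1 := rfl
    have hj2 : intCastL m y2 = u2 := rfl
    rw [hj1, hj2] at hT
    have hspanT : Submodule.span ℝ (T : Set (Fin m → ℝ)) = Submodule.span ℝ {u1, u2} := by
      rw [hT]; exact span_span_pair u1 u2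
    rw [hspanT] at hs1T hs2T
    obtain ⟨p, q, hpq⟩ := Submodule.mem_span_pair.1 hs1T
    obtain ⟨p', q', hpq'⟩ := Submodule.mem_span_pair.1 hs2T
    have hindu : LinearIndependent ℝ ![u1, u2] := indep_of_spanning hind hs1T hs2T
    set c1 : ℚ := f (fun i => (y1 i : ℚ)) with hc1
    set c2 : ℚ := f (fun i => (y2 i : ℚ)) with hc2
    -- extract real/imaginary data from hf
    have key : ∀ i, (f (Pi.single i 1) : ℂ)
        = (((f (Pi.single i 1) : ℝ)) : ℂ) := by intro i; norm_cast
    rw [show (∑ i, (f (Pi.single i 1) : ℂ) * ((s1 i : ℂ) + (s2 i : ℂ) * Complex.I))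
        = ∑ i, (((f (Pi.single i 1) : ℝ)) : ℂ) * ((s1 i : ℂ) + (s2 i : ℂ) * Complex.I) from
      Finset.sum_congr rfl fun i _ => by rw [key i]] at hf
    rw [sum_split] at hf
    obtain ⟨hre, him⟩ := hf
    have hre' : p * (c1 : ℝ) + q * (c2 : ℝ) = β.re := by
      rw [← hre]
      have hsi : ∀ i, s1 i = p * (y1 i : ℝ) + q * (y2 i : ℝ) := by
        intro i
        have := congrFun hpq i
        simpa [hu1, hu2, intCast] using this.symm
      calc p * (c1 : ℝ) + q * (c2 : ℝ)
          = p * ∑ i, (f (Pi.single i 1) : ℝ) * (y1 i : ℝ)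
            + q * ∑ i, (f (Pi.single i 1) : ℝ) * (y2 i : ℝ) := by
            rw [sum_cast, sum_cast, ← hc1, ← hc2]
        _ = ∑ i, (f (Pi.single i 1) : ℝ) * (p * (y1 i : ℝ) + q * (y2 i : ℝ)) :=
            (sum_comb _ _ _ _ _).symm
        _ = ∑ i, (f (Pi.single i 1) : ℝ) * s1 i :=
            Finset.sum_congr rfl fun i _ => by rw [← hsi i]
    have him' : p' * (c1 : ℝ) + q' * (c2 : ℝ) = β.im := by
      rw [← him]
      have hsi : ∀ i, s2 i = p' * (y1 i : ℝ) + q' * (y2 i : ℝ) := by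
        intro i
        have := congrFun hpq' i
        simpa [hu1, hu2, intCast] using this.symm
      calc p' * (c1 : ℝ) + q' * (c2 : ℝ)
          = p' * ∑ i, (f (Pi.single i 1) : ℝ) * (y1 i : ℝ)
            + q' * ∑ i, (f (Pi.single i 1) : ℝ) * (y2 i : ℝ) := by
            rw [sum_cast, sum_cast, ← hc1, ← hc2]
        _ = ∑ i, (f (Pi.single i 1) : ℝ) * (p' * (y1 i : ℝ) + q' * (y2 i : ℝ)) :=
            (sum_comb _ _ _ _ _).symm
        _ = ∑ i, (f (Pi.single i 1) : ℝ) * s2 i :=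
            Finset.sum_congr rfl fun i _ => by rw [← hsi i]
    -- build the lattice L
    set N : ℤ := (c1.den : ℤ) * (c2.den : ℤ) with hN
    have hNne : (N : ℝ) ≠ 0 := by
      rw [hN]
      push_cast
      positivity
    set d1 : ℤ := c1.num * (c2.den : ℤ) with hd1
    set d2 : ℤ := c2.num * (c1.den : ℤ) with hd2
    have hd1r : (d1 : ℝ) = (N : ℝ) * (c1 : ℝ) := by
      rw [hd1, hN]
      push_cast
      rw [Rat.cast_def]
      field_simp
    have hd2r : (d2 : ℝ) = (N : ℝ) * (c2 : ℝ) := by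
      rw [hd2, hN]
      push_cast
      rw [Rat.cast_def]
      field_simp
    set v : ℝ × (Fin m → ℝ) × ℝ := ((0 : ℝ), (N : ℝ) • u1, (d1 : ℝ)) with hv
    set w : ℝ × (Fin m → ℝ) × ℝ := ((0 : ℝ), (N : ℝ) • u2, (d2 : ℝ)) with hw
    refine ⟨Submodule.span ℤ {v, w}, ?_, ?_, ?_, ?_⟩
    · intro x hx
      rw [Mset_eq]
      have hsub : Submodule.span ℤ {v, w} ≤ LinearMap.range (jL m) := by
        rw [Submodule.span_le]
        rintro z (rfl | rfl)
        · refine ⟨(0, N • y1, d1), ?_⟩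
          show (((0:ℤ) : ℝ), intCast (N • y1), ((d1 : ℤ) : ℝ)) = v
          rw [hv, hu1, intCast_zsmul]
          norm_num
        · refine ⟨(0, N • y2, d2), ?_⟩
          show (((0:ℤ) : ℝ), intCast (N • y2), ((d2 : ℤ) : ℝ)) = w
          rw [hw, hu2, intCast_zsmul]
          norm_num
      exact hsub hx
    · have hvw : LinearIndependent ℤ ![v, w] := by
        rw [LinearIndependent.pair_iff]
        intro a b hab
        have hmid := congrArg (fun z => z.2.1) hab
        simp only [Prod.snd_add, Prod.fst_add, Prod.smul_snd, Prod.smul_fst, hv, hw,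
          Prod.zero_eq_mk] at hmid
        have hmid' : ((a * N : ℤ) : ℝ) • u1 + ((b * N : ℤ) : ℝ) • u2 = 0 := by
          push_cast
          rw [mul_smul, mul_smul]
          convert hmid using 2
          · rw [Int.cast_smul_eq_zsmul]
          · rw [Int.cast_smul_eq_zsmul]
        have h2 := LinearIndependent.pair_iff.1 hindu _ _ hmid'
        have hNz : N ≠ 0 := by
          intro h
          rw [h] at hNne
          simp at hNne
        constructor
        · have : (a * N : ℤ) = 0 := by exact_mod_cast h2.1
          exact (mul_eq_zero.1 this).resolve_right hNz
        · have : (b * N : ℤ) = 0 := by exact_mod_cast h2.2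
          exact (mul_eq_zero.1 this).resolve_right hNz
      have h := finrank_span_eq_card hvw
      rw [range_fin2] at h
      simp at h
      exact h
    · rw [span_span_pair]
      refine Submodule.mem_span_pair.2 ⟨p / N, q / N, ?_⟩
      rw [hv, hw]
      refine Prod.ext ?_ (Prod.ext ?_ ?_)
      · simp
      · show (p / N) • ((N : ℝ) • u1) + (q / N) • ((N : ℝ) • u2) = s1
        rw [smul_smul, smul_smul, div_mul_cancel₀ _ hNne, div_mul_cancel₀ _ hNne]
        exact hpq
      · show (p / N) * (d1 : ℝ) + (q / N) * (d2 : ℝ) = β.re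
        rw [hd1r, hd2r, ← hre']
        field_simp
    · rw [span_span_pair]
      refine Submodule.mem_span_pair.2 ⟨p' / N, q' / N, ?_⟩
      rw [hv, hw]
      refine Prod.ext ?_ (Prod.ext ?_ ?_)
      · simp
      · show (p' / N) • ((N : ℝ) • u1) + (q' / N) • ((N : ℝ) • u2) = s2
        rw [smul_smul, smul_smul, div_mul_cancel₀ _ hNne, div_mul_cancel₀ _ hNne]
        exact hpq'
      · show (p' / N) * (d1 : ℝ) + (q' / N) * (d2 : ℝ) = β.im
        rw [hd1r, hd2r, ← him']
        field_simp
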